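/- For the SE₂(3)-parameterized direct IMU integration, the one-step error-state Jacobian F = [[I, 0, 0],[T g^∧, I, 0],[½T² g^∧, T·I, I]] (acting on (δφ, δv, δr) ∈ ℝ⁹) maps the null-space matrix N = [[g, 0],[0, 0],[0, I₃]] ∈ ℝ^{9×4} to itself: F N = N. -/

import Mathlib

open Matrix

/-- The skew-symmetric matrix `a^∧` of `a ∈ ℝ³`. -/
def hat (a : Fin 3 → ℝ) : Matrix (Fin 3) (Fin 3) ℝ :=
  !![0, -a 2, a 1; a 2, 0, -a 0; -a 1, a 0, 0]

/-- The one-step error-state Jacobian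
`F = [[I,0,0],[T g^∧, I, 0],[½T² g^∧, T I, I]]` on `(δφ, δv, δr) ∈ ℝ⁹`. -/
noncomputable def Fmat (g : Fin 3 → ℝ) (T : ℝ) :
    Matrix (Fin 3 ⊕ (Fin 3 ⊕ Fin 3)) (Fin 3 ⊕ (Fin 3 ⊕ Fin 3)) ℝ :=
  fromBlocks 1 0
    (fromRows (T • hat g) (((1 : ℝ) / 2 * T ^ 2) • hat g))
    (fromBlocks 1 0 (T • (1 : Matrix (Fin 3) (Fin 3) ℝ)) 1)

/-- The null-space matrix `N = [[g, 0],[0, 0],[0, I₃]] ∈ ℝ^{9×4}`. -/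
def Nmat (g : Fin 3 → ℝ) : Matrix (Fin 3 ⊕ (Fin 3 ⊕ Fin 3)) (Fin 1 ⊕ Fin 3) ℝ :=
  fromBlocks (Matrix.of fun i (_ : Fin 1) => g i) 0
    0 (fromRows 0 1)

/-- `F N = N`: the `SE₂(3)` one-step Jacobian maps the null space to itself. -/
theorem FN_eq_N (g : Fin 3 → ℝ) (T : ℝ) (hT : 0 < T) :
    Fmat g T * Nmat g = Nmat g := by
  ext i j
  rcases i with i | i | i <;> rcases j with j | j <;>
    fin_cases i <;> fin_cases j <;>
    simp [Fmat, Nmat, hat, Matrix.mul_apply, Fintype.sum_sum_type,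
      Fin.sum_univ_succ, fromBlocks, fromRows, Sum.elim, Matrix.one_apply] <;> ring
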